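/- Let G = AGL(d,2) with d ≥ 2 (or G = Z_2^4⋅A_7 < AGL(4,2) with d = 4) act on the points of AG(d,2). For distinct points 0, 1, c, the pointwise stabilizer G(0,1,c) has exactly four fixed points in AG(d,2), namely 0, 1, c and the fourth point c' of the affine plane spanned by 0, 1, c. -/

import Mathlib

set_option synthInstance.maxHeartbeats 1000000
set_option maxHeartbeats 1000000

lemma pi_addself {d : ℕ} (x : Fin d → ZMod 2) : x + x = 0 :=
  funext fun i => by
    have : ∀ z : ZMod 2, z + z = 0 := by decide
    simpa using this (x i)

lemma pi_add_cancel {d : ℕ} (u w : Fin d → ZMod 2) : u + w + w = u := by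
  rw [add_assoc, pi_addself, add_zero]

lemma pi_eq_of_add_eq_zero {d : ℕ} {x y : Fin d → ZMod 2} (h : x + y = 0) : x = y := by
  have h2 : x + y + y = 0 + y := by rw [h]
  rwa [pi_add_cancel, zero_add] at h2

lemma li3_of {d : ℕ} {v1 v2 v3 : Fin d → ZMod 2} (h1 : v1 ≠ 0) (h2 : v2 ≠ 0) (h12 : v1 ≠ v2)
    (h3 : v3 ≠ 0) (h31 : v3 ≠ v1) (h32 : v3 ≠ v2) (h312 : v3 ≠ v1 + v2) :
    LinearIndependent (ZMod 2) ![v1, v2, v3] := by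
  rw [Fintype.linearIndependent_iff]
  intro g hg
  have hz : ∀ z : ZMod 2, z = 0 ∨ z = 1 := by decide
  rw [Fin.sum_univ_three] at hg
  simp only [Matrix.cons_val_zero, Matrix.cons_val_one, Matrix.head_cons,
    Matrix.cons_val_two, Matrix.tail_cons] at hg
  rcases hz (g 0) with e0 | e0 <;> rcases hz (g 1) with e1 | e1 <;>
    rcases hz (g 2) with e2 | e2 <;>
    rw [e0, e1, e2] at hg <;>
    simp only [one_smul, zero_smul, zero_add, add_zero] at hg
  · intro i; fin_cases i <;> assumption
  · exact absurd hg h3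
  · exact absurd hg h2
  · exact absurd (pi_eq_of_add_eq_zero hg).symm h32
  · exact absurd hg h1
  · exact absurd (pi_eq_of_add_eq_zero hg).symm h31
  · exact absurd (pi_eq_of_add_eq_zero hg) h12
  · exact absurd (pi_eq_of_add_eq_zero hg).symm h312

lemma exists_transvection {d : ℕ} {v1 v2 v3 : Fin d → ZMod 2}
    (h : v3 ∉ Submodule.span (ZMod 2) ({v1, v2} : Set (Fin d → ZMod 2))) :
    ∃ A : (Fin d → ZMod 2) ≃ₗ[ZMod 2] (Fin d → ZMod 2),
      A v1 = v1 ∧ A v2 = v2 ∧ A v3 = v3 + v1 := by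
  set W := Submodule.span (ZMod 2) ({v1, v2} : Set (Fin d → ZMod 2)) with hW
  have hq : W.mkQ v3 ≠ 0 := by
    simpa [Submodule.Quotient.mk_eq_zero] using h
  obtain ⟨ψ, hψ⟩ : ∃ ψ : Module.Dual (ZMod 2) ((Fin d → ZMod 2) ⧸ W), ψ (W.mkQ v3) ≠ 0 := by
    by_contra h'
    push_neg at h'
    exact hq ((Module.forall_dual_apply_eq_zero_iff (ZMod 2) _).mp h')
  set φ : (Fin d → ZMod 2) →ₗ[ZMod 2] ZMod 2 := ψ ∘ₗ W.mkQ with hφ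
  have hφ1 : φ v1 = 0 := by
    have h1 : W.mkQ v1 = 0 := by
      rw [Submodule.mkQ_apply, Submodule.Quotient.mk_eq_zero]
      exact Submodule.subset_span (by simp)
    simp [hφ, h1]
  have hφ2 : φ v2 = 0 := by
    have h1 : W.mkQ v2 = 0 := by
      rw [Submodule.mkQ_apply, Submodule.Quotient.mk_eq_zero]
      exact Submodule.subset_span (by simp)
    simp [hφ, h1]
  have hφ3 : φ v3 = 1 := by
    have h01 : ∀ z : ZMod 2, z ≠ 0 → z = 1 := by decide
    exact h01 _ hψ
  set f : (Fin d → ZMod 2) →ₗ[ZMod 2] (Fin d → ZMod 2) := LinearMap.id + φ.smulRight v1 with hf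
  have hfy : ∀ y, f y = y + φ y • v1 := fun y => rfl
  have hinv : Function.Involutive f := by
    intro y
    have h1 : φ (y + φ y • v1) = φ y := by
      rw [map_add, map_smul, hφ1, smul_zero, add_zero]
    have h2 : φ y + φ y = 0 := by
      have : ∀ z : ZMod 2, z + z = 0 := by decide
      exact this _
    rw [hfy, hfy, h1, add_assoc, ← add_smul, h2, zero_smul, add_zero]
  refine ⟨LinearEquiv.ofInvolutive f hinv, ?_, ?_, ?_⟩ <;>
    simp only [LinearEquiv.coe_ofInvolutive]
  · rw [hfy, hφ1, zero_smul, add_zero]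
  · rw [hfy, hφ2, zero_smul, add_zero]
  · rw [hfy, hφ3, one_smul]

/-- `g` is an affine permutation of `GF(2)^d`. -/
def IsAffinePerm {d : ℕ} (g : Equiv.Perm (Fin d → ZMod 2)) : Prop :=
  ∃ (A : (Fin d → ZMod 2) ≃ₗ[ZMod 2] (Fin d → ZMod 2)) (t : Fin d → ZMod 2),
    ∀ x, g x = A x + t

/-- for `G = AGL(d,2)` (`d ≥ 2`), or `G = Z₂⁴⋅A₇ < AGL(4,2)`, acting on
`AG(d,2)`, the pointwise stabilizer of three distinct points `a, b, c` has exactly the four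
fixed points `a, b, c, a+b+c` (the fourth point of the affine plane they span). -/
theorem stmt14 (d : ℕ) (hd : 2 ≤ d) (G : Subgroup (Equiv.Perm (Fin d → ZMod 2)))
    (haff : ∀ g ∈ G, IsAffinePerm g)
    (hG : (∀ π : Equiv.Perm (Fin d → ZMod 2), IsAffinePerm π → π ∈ G) ∨
      (d = 4 ∧ (∀ t : Fin d → ZMod 2, Equiv.addLeft t ∈ G) ∧ Nat.card G = 40320)) :
    ∀ a b c : Fin d → ZMod 2, a ≠ b → a ≠ c → b ≠ c →
      {x : Fin d → ZMod 2 | ∀ g ∈ G, g a = a → g b = b → g c = c → g x = x}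
        = {a, b, c, a + b + c} := by
  intro a b c hab hac hbc
  ext x
  simp only [Set.mem_setOf_eq, Set.mem_insert_iff, Set.mem_singleton_iff]
  constructor
  · -- hard direction
    intro hx
    by_contra hne
    push_neg at hne
    obtain ⟨hxa, hxb, hxc, hxs⟩ := hne
    -- the seven nondegeneracy conditions
    have h1 : a + b ≠ 0 := fun h => hab (pi_eq_of_add_eq_zero h)
    have h2 : a + c ≠ 0 := fun h => hac (pi_eq_of_add_eq_zero h)
    have h12 : a + b ≠ a + c := fun h => hbc (by
      have := congrArg (fun z => a + z) h
      simpa [← add_assoc, pi_addself] using this)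
    have h3 : a + x ≠ 0 := fun h => hxa (pi_eq_of_add_eq_zero h).symm
    have h31 : a + x ≠ a + b := fun h => hxb (by
      have := congrArg (fun z => a + z) h
      simpa [← add_assoc, pi_addself] using this)
    have h32 : a + x ≠ a + c := fun h => hxc (by
      have := congrArg (fun z => a + z) h
      simpa [← add_assoc, pi_addself] using this)
    have hsum : (a + b) + (a + c) = a + (a + b + c) := by
      calc (a + b) + (a + c) = (a + a) + (b + c) := by ring
        _ = b + c := by rw [pi_addself, zero_add]
        _ = (a + a) + (b + c) := by rw [pi_addself, zero_add]
        _ = a + (a + b + c) := by ring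
    have h312 : a + x ≠ (a + b) + (a + c) := by
      rw [hsum]
      intro h
      exact hxs (by
        have := congrArg (fun z => a + z) h
        simpa [← add_assoc, pi_addself] using this)
    have hspan : a + x ∉ Submodule.span (ZMod 2) ({a + b, a + c} : Set (Fin d → ZMod 2)) := by
      intro hmem
      rw [Submodule.mem_span_pair] at hmem
      obtain ⟨p, q, hpq⟩ := hmem
      have hz : ∀ z : ZMod 2, z = 0 ∨ z = 1 := by decide
      rcases hz p with hp | hp <;> rcases hz q with hq | hq <;> rw [hp, hq] at hpq <;>
        simp only [one_smul, zero_smul, zero_add, add_zero] at hpq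
      · exact h3 hpq.symm
      · exact h32 hpq.symm
      · exact h31 hpq.symm
      · exact h312 hpq.symm
    rcases hG with hG1 | ⟨hd4, htr, hcard⟩
    · -- G = AGL(d,2): explicit transvection
      obtain ⟨A, hA1, hA2, hA3⟩ := exists_transvection hspan
      set t : Fin d → ZMod 2 := a + A a with ht
      set g : Equiv.Perm (Fin d → ZMod 2) := A.toEquiv.trans (Equiv.addLeft t) with hgdef
      have hgy : ∀ y, g y = A y + t := fun y => by
        simp [hgdef, Equiv.addLeft, add_comm]
      have hgG : g ∈ G := hG1 g ⟨A, t, hgy⟩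
      have hga : g a = a := by
        rw [hgy, ht]
        calc A a + (a + A a) = a + (A a + A a) := by ring
          _ = a := by rw [pi_addself, add_zero]
      have hb' : a + (a + b) = b := by rw [← add_assoc, pi_addself, zero_add]
      have hc' : a + (a + c) = c := by rw [← add_assoc, pi_addself, zero_add]
      have hx' : a + (a + x) = x := by rw [← add_assoc, pi_addself, zero_add]
      have hgb : g b = b := by
        rw [← hb', hgy, map_add, hA1, ht]
        calc A a + (a + b) + (a + A a) = (a + (a + b)) + (A a + A a) := by ring
          _ = a + (a + b) := by rw [pi_addself, add_zero]
      have hgc : g c = c := by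
        rw [← hc', hgy, map_add, hA2, ht]
        calc A a + (a + c) + (a + A a) = (a + (a + c)) + (A a + A a) := by ring
          _ = a + (a + c) := by rw [pi_addself, add_zero]
      have hgx : g x = x + (a + b) := by
        rw [← hx', hgy, map_add, hA3, ht]
        calc A a + (a + x + (a + b)) + (a + A a)
            = (a + (a + x) + (a + b)) + (A a + A a) := by ring
          _ = a + (a + x) + (a + b) := by rw [pi_addself, add_zero]
      have hfix := hx g hgG hga hgb hgc
      rw [hgx] at hfix
      have : a + b = 0 := by
        have h0 : x + (a + b) = x + 0 := by rw [add_zero]; exact hfix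
        exact add_left_cancel h0
      exact h1 this
    · -- G = Z₂⁴⋅A₇: counting argument
      subst hd4
      have li3 := li3_of h1 h2 h12 h3 h31 h32 h312
      set W := Submodule.span (ZMod 2) (Set.range ![a + b, a + c, a + x]) with hWdef
      have hcardW : Nat.card W = 8 := by
        rw [Nat.card_congr (Module.Basis.span li3).equivFun.toEquiv, Nat.card_eq_fintype_card]
        simp [ZMod.card]
      obtain ⟨v4, hv4W⟩ : ∃ v4, v4 ∉ W := by
        by_contra hcc
        push_neg at hcc
        have htop : W = ⊤ := Submodule.eq_top_iff'.mpr hcc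
        have h16 : Nat.card W = 16 := by
          rw [htop, Nat.card_congr Submodule.topEquiv.toEquiv, Nat.card_eq_fintype_card]
          simp [ZMod.card]
        omega
      have li4 : LinearIndependent (ZMod 2) (Fin.cons v4 ![a + b, a + c, a + x]) :=
        linearIndependent_fin_cons.mpr ⟨li3, hv4W⟩
      set B := basisOfLinearIndependentOfCardEqFinrank li4 (by simp) with hBdef
      have hB : ∀ i, B i = (Fin.cons v4 ![a + b, a + c, a + x] :
          Fin 4 → (Fin 4 → ZMod 2)) i := fun i => by
        rw [hBdef, coe_basisOfLinearIndependentOfCardEqFinrank]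
      -- key affine analysis
      have key : ∀ g : Equiv.Perm (Fin 4 → ZMod 2), IsAffinePerm g →
          g a = a → g b = b → g c = c → g x = x →
          ∃ A : (Fin 4 → ZMod 2) ≃ₗ[ZMod 2] (Fin 4 → ZMod 2),
            (∀ y, g y = A y + (a + A a)) ∧ A (a + b) = a + b ∧ A (a + c) = a + c ∧
              A (a + x) = a + x ∧ g (a + v4) + a = A v4 := by
        rintro g ⟨A, t, hAt⟩ hga hgb hgc hgx
        have hAy : ∀ y, A y = g y + t := fun y => by
          rw [hAt y]; exact (pi_add_cancel _ _).symm
        have ht : t = a + A a := by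
          rw [hAy a, hga, ← add_assoc, pi_addself, zero_add]
        have fix : ∀ y z : Fin 4 → ZMod 2, g y = y → g z = z → A (y + z) = y + z := by
          intro y z hy hz
          rw [map_add, hAy y, hAy z, hy, hz]
          calc y + t + (z + t) = (y + z) + (t + t) := by ring
            _ = y + z := by rw [pi_addself, add_zero]
        refine ⟨A, fun y => by rw [hAt y, ht], fix a b hga hgb, fix a c hga hgc,
          fix a x hga hgx, ?_⟩
        rw [hAt (a + v4), map_add, ht]
        calc A a + A v4 + (a + A a) + a = A v4 + ((A a + A a) + (a + a)) := by ring
          _ = A v4 := by rw [pi_addself, pi_addself, add_zero, add_zero]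
      set H := MulAction.stabilizer G ((a, b, c) : _ × _ × _) with hHdef
      have hstab : ∀ g : G, g ∈ H ↔
          (g : Equiv.Perm (Fin 4 → ZMod 2)) a = a ∧ (g : Equiv.Perm _) b = b ∧
            (g : Equiv.Perm _) c = c := by
        intro g
        rw [hHdef, MulAction.mem_stabilizer_iff]
        simp [Prod.ext_iff, Subgroup.smul_def, Equiv.Perm.smul_def]
      have hfix : ∀ g : H, (g.1 : Equiv.Perm (Fin 4 → ZMod 2)) a = a ∧
          (g.1 : Equiv.Perm _) b = b ∧ (g.1 : Equiv.Perm _) c = c :=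
        fun g => (hstab g.1).mp g.2
      have hfixx : ∀ g : H, (g.1 : Equiv.Perm (Fin 4 → ZMod 2)) x = x :=
        fun g => hx _ g.1.2 (hfix g).1 (hfix g).2.1 (hfix g).2.2
      have keyH : ∀ g : H,
          ∃ A : (Fin 4 → ZMod 2) ≃ₗ[ZMod 2] (Fin 4 → ZMod 2),
            (∀ y, (g.1 : Equiv.Perm (Fin 4 → ZMod 2)) y = A y + (a + A a)) ∧
              A (a + b) = a + b ∧ A (a + c) = a + c ∧
              A (a + x) = a + x ∧ (g.1 : Equiv.Perm (Fin 4 → ZMod 2)) (a + v4) + a = A v4 :=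
        fun g => key _ (haff _ g.1.2) (hfix g).1 (hfix g).2.1 (hfix g).2.2 (hfixx g)
      have hΦmem : ∀ g : H, ((g.1 : Equiv.Perm (Fin 4 → ZMod 2)) (a + v4) + a) ∉ W := by
        intro g hmem
        obtain ⟨A, hAy, hA1, hA2, hA3, hA4⟩ := keyH g
        rw [hA4] at hmem
        have hsv1 : A.symm (a + b) = a + b := A.injective (by rw [A.apply_symm_apply, hA1])
        have hsv2 : A.symm (a + c) = a + c := A.injective (by rw [A.apply_symm_apply, hA2])
        have hsv3 : A.symm (a + x) = a + x := A.injective (by rw [A.apply_symm_apply, hA3])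
        have hv4mem : v4 ∈ W := by
          have hm : A.symm (A v4) ∈
              Submodule.map (A.symm : (Fin 4 → ZMod 2) →ₗ[ZMod 2] (Fin 4 → ZMod 2)) W :=
            Submodule.mem_map_of_mem hmem
          rw [hWdef, Submodule.map_span, ← Set.range_comp] at hm
          have hco : (⇑(A.symm : (Fin 4 → ZMod 2) →ₗ[ZMod 2] (Fin 4 → ZMod 2)) ∘
              ![a + b, a + c, a + x]) = ![a + b, a + c, a + x] := by
            funext i
            fin_cases i <;>
              simp [hsv1, hsv2, hsv3]
          rw [hco] at hm
          rwa [A.symm_apply_apply] at hm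
        exact hv4W hv4mem
      have hΦinj : Function.Injective
          (fun g : H => (⟨(g.1 : Equiv.Perm (Fin 4 → ZMod 2)) (a + v4) + a, hΦmem g⟩ :
            {z : Fin 4 → ZMod 2 // z ∉ W})) := by
        intro g1 g2 heq
        have heq' : (g1.1 : Equiv.Perm (Fin 4 → ZMod 2)) (a + v4) + a
            = (g2.1 : Equiv.Perm (Fin 4 → ZMod 2)) (a + v4) + a :=
          congrArg Subtype.val heq
        obtain ⟨A1, hAy1, h11, h12, h13, h14⟩ := keyH g1
        obtain ⟨A2, hAy2, h21, h22, h23, h24⟩ := keyH g2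
        have hA : (A1 : (Fin 4 → ZMod 2) →ₗ[ZMod 2] (Fin 4 → ZMod 2)) = A2 := by
          apply B.ext
          intro i
          rw [hB i]
          fin_cases i
          · simp only [Fin.cons_zero]
            show A1 v4 = A2 v4
            rw [← h14, ← h24, heq']
          · show A1 (![a + b, a + c, a + x] 0) = A2 (![a + b, a + c, a + x] 0)
            simp only [Matrix.cons_val_zero]
            rw [h11, h21]
          · show A1 (![a + b, a + c, a + x] 1) = A2 (![a + b, a + c, a + x] 1)
            simp only [Matrix.cons_val_one, Matrix.head_cons, Matrix.cons_val_zero]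
            rw [h12, h22]
          · show A1 (![a + b, a + c, a + x] 2) = A2 (![a + b, a + c, a + x] 2)
            simp only [Matrix.cons_val_two, Matrix.tail_cons, Matrix.head_cons]
            rw [h13, h23]
        have hAa : ∀ y, A1 y = A2 y := fun y => DFunLike.congr_fun hA y
        apply Subtype.ext
        apply Subtype.ext
        apply Equiv.ext
        intro y
        rw [hAy1 y, hAy2 y, hAa y, hAa a]
      -- cardinality bounds
      have h8 : Nat.card {z : Fin 4 → ZMod 2 // z ∉ W} = 8 := by
        classical
        rw [Nat.card_eq_fintype_card, Fintype.card_subtype_compl]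
        have hWf : Fintype.card {z : Fin 4 → ZMod 2 // z ∈ W} = 8 := by
          rw [← Nat.card_eq_fintype_card]; exact hcardW
        rw [hWf]
        have h16 : Fintype.card (Fin 4 → ZMod 2) = 16 := by simp [ZMod.card]
        omega
      have hHle : Nat.card H ≤ 8 := by
        calc Nat.card H ≤ Nat.card {z : Fin 4 → ZMod 2 // z ∉ W} :=
              Nat.card_le_card_of_injective _ hΦinj
          _ = 8 := h8
      have horb : Nat.card (MulAction.orbit G ((a, b, c) : _ × _ × _)) * Nat.card H
          = Nat.card G := by
        rw [hHdef, ← Nat.card_prod]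
        exact Nat.card_congr (MulAction.orbitProdStabilizerEquivGroup G _)
      have horble : Nat.card (MulAction.orbit G ((a, b, c) : _ × _ × _)) ≤ 4096 := by
        have hle : Nat.card (MulAction.orbit G ((a, b, c) : _ × _ × _))
            ≤ Nat.card ((Fin 4 → ZMod 2) × (Fin 4 → ZMod 2) × (Fin 4 → ZMod 2)) :=
          Nat.card_le_card_of_injective Subtype.val Subtype.val_injective
        have hcards : Nat.card ((Fin 4 → ZMod 2) × (Fin 4 → ZMod 2) × (Fin 4 → ZMod 2))
            = 4096 := by
          simp [Nat.card_prod, Nat.card_eq_fintype_card, ZMod.card]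
        omega
      rw [hcard] at horb
      have hmul := Nat.mul_le_mul horble hHle
      rw [horb] at hmul
      exact absurd hmul (by norm_num)
  · -- easy direction
    rintro (rfl | rfl | rfl | rfl) <;> intro g hgG hga hgb hgc
    · exact hga
    · exact hgb
    · exact hgc
    · obtain ⟨A, t, hAt⟩ := haff g hgG
      have hAy : ∀ y, A y = g y + t := fun y => by
        rw [hAt y]; exact (pi_add_cancel _ _).symm
      rw [hAt, map_add, map_add, hAy a, hAy b, hAy c, hga, hgb, hgc]
      calc a + t + (b + t) + (c + t) + t = (a + b + c) + ((t + t) + (t + t)) := by ring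
        _ = a + b + c := by rw [pi_addself, add_zero]
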